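/- If G is a connected {P6, C5, P5-complement, K_{1,3}}-free graph that contains an induced C6, then G is isomorphic to a complete expansion of C6, i.e., G ≅ K[C6](m1,...,m6) for some positive integers m_i. -/

import Mathlib

open SimpleGraph Finset

/-- `G` contains an induced copy of `H`. -/
def HasInducedCopy {V W : Type*} (G : SimpleGraph V) (H : SimpleGraph W) : Prop :=
  ∃ f : W ↪ V, ∀ a b, G.Adj (f a) (f b) ↔ H.Adj a b

/-- The cycle on `ZMod n` (for `n ≥ 3`). -/
def cyc (n : ℕ) : SimpleGraph (ZMod n) where
  Adj i j := i ≠ j ∧ (i = j + 1 ∨ j = i + 1)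
  symm := ⟨fun i j h => ⟨h.1.symm, h.2.symm⟩⟩
  loopless := ⟨fun i h => h.1 rfl⟩

/-- Kite: diamond (K4 minus an edge) plus a pendant vertex adjacent to a degree-3 vertex. -/
def kite : SimpleGraph (Fin 5) :=
  SimpleGraph.fromEdgeSet {s(0,1), s(0,2), s(1,2), s(1,3), s(2,3), s(1,4)}

/-- Bull: triangle with two pendant edges at distinct vertices. -/
def bull : SimpleGraph (Fin 5) :=
  SimpleGraph.fromEdgeSet {s(0,1), s(0,2), s(1,2), s(0,3), s(1,4)}

/-- Independent expansion of the cycle `C_n`. -/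
def indExp (n : ℕ) (m : ZMod n → ℕ) : SimpleGraph (Σ i : ZMod n, Fin (m i)) where
  Adj x y := x.1 ≠ y.1 ∧ (x.1 = y.1 + 1 ∨ y.1 = x.1 + 1)
  symm := ⟨fun x y h => ⟨h.1.symm, h.2.symm⟩⟩
  loopless := ⟨fun x h => h.1 rfl⟩

/-- Complete expansion of the cycle `C_n`. -/
def compExp (n : ℕ) (m : ZMod n → ℕ) : SimpleGraph (Σ i : ZMod n, Fin (m i)) where
  Adj x y := (x.1 = y.1 ∧ x ≠ y) ∨ (x.1 ≠ y.1 ∧ (x.1 = y.1 + 1 ∨ y.1 = x.1 + 1))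
  symm := by
    constructor
    rintro x y (⟨h, hne⟩ | ⟨h, h2⟩)
    · exact Or.inl ⟨h.symm, hne.symm⟩
    · exact Or.inr ⟨h.symm, h2.symm⟩
  loopless := by constructor; rintro x (⟨_, hne⟩ | ⟨h, _⟩); exacts [hne rfl, h rfl]

/-- Distance from a vertex to a set of vertices. -/
noncomputable def distToSet {V : Type*} (G : SimpleGraph V) (S : Set V) (x : V) : ℕ :=
  sInf ((fun y => G.dist x y) '' S)

section Helpers
variable {V : Type*} {G : SimpleGraph V}

instance instDecCyc (n : ℕ) : DecidableRel (cyc n).Adj := fun a b =>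
  inferInstanceAs (Decidable (a ≠ b ∧ (a = b + 1 ∨ b = a + 1)))
instance instDecPath (n : ℕ) : DecidableRel (pathGraph n).Adj := fun _ _ =>
  decidable_of_iff _ SimpleGraph.pathGraph_adj.symm
instance instDecPathC (n : ℕ) : DecidableRel ((pathGraph n)ᶜ).Adj := fun a b =>
  inferInstanceAs (Decidable (a ≠ b ∧ ¬(pathGraph n).Adj a b))

lemma hasClaw {x a b c : V} (hab : a ≠ b) (hac : a ≠ c) (hbc : b ≠ c)
    (hxa : G.Adj x a) (hxb : G.Adj x b) (hxc : G.Adj x c)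
    (nab : ¬G.Adj a b) (nac : ¬G.Adj a c) (nbc : ¬G.Adj b c) :
    HasInducedCopy G (completeBipartiteGraph (Fin 1) (Fin 3)) := by
  have h1 : x ≠ a := hxa.ne
  have h2 : x ≠ b := hxb.ne
  have h3 : x ≠ c := hxc.ne
  refine ⟨⟨Sum.elim (fun _ => x) ![a,b,c], ?_⟩, ?_⟩
  · rintro (i|i) (j|j) h
    · exact congrArg Sum.inl (Subsingleton.elim i j)
    · exfalso; fin_cases j <;> simp_all
    · exfalso; fin_cases i <;> simp_all
    · congr 1; fin_cases i <;> fin_cases j <;> simp_all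
  · show ∀ p q, G.Adj (Sum.elim (fun _ => x) ![a,b,c] p) (Sum.elim (fun _ => x) ![a,b,c] q) ↔ _
    rintro (i|i) (j|j)
    · simp [G.irrefl, Subsingleton.elim i j]
    · fin_cases j <;> simp_all
    · fin_cases i <;> simp_all [G.adj_comm]
    · fin_cases i <;> fin_cases j <;> simp_all [G.irrefl, G.adj_comm]

lemma hasP6 {w1 w2 w3 w4 w5 w6 : V}
    (A12 : G.Adj w1 w2) (N13 : ¬G.Adj w1 w3) (N14 : ¬G.Adj w1 w4) (N15 : ¬G.Adj w1 w5) (N16 : ¬G.Adj w1 w6) (A23 : G.Adj w2 w3) (N24 : ¬G.Adj w2 w4) (N25 : ¬G.Adj w2 w5) (N26 : ¬G.Adj w2 w6) (A34 : G.Adj w3 w4) (N35 : ¬G.Adj w3 w5) (N36 : ¬G.Adj w3 w6) (A45 : G.Adj w4 w5) (N46 : ¬G.Adj w4 w6) (A56 : G.Adj w5 w6) :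
    HasInducedCopy G (pathGraph 6) := by
  have A21 := A12.symm
  have N31 : ¬G.Adj w3 w1 := fun h => N13 h.symm
  have N41 : ¬G.Adj w4 w1 := fun h => N14 h.symm
  have N51 : ¬G.Adj w5 w1 := fun h => N15 h.symm
  have N61 : ¬G.Adj w6 w1 := fun h => N16 h.symm
  have A32 := A23.symm
  have N42 : ¬G.Adj w4 w2 := fun h => N24 h.symm
  have N52 : ¬G.Adj w5 w2 := fun h => N25 h.symm
  have N62 : ¬G.Adj w6 w2 := fun h => N26 h.symm
  have A43 := A34.symm
  have N53 : ¬G.Adj w5 w3 := fun h => N35 h.symm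
  have N63 : ¬G.Adj w6 w3 := fun h => N36 h.symm
  have A54 := A45.symm
  have N64 : ¬G.Adj w6 w4 := fun h => N46 h.symm
  have A65 := A56.symm
  have e13 : w1 ≠ w3 := fun h => by subst h; exact N14 A34
  have e14 : w1 ≠ w4 := fun h => by subst h; exact N13 A43
  have e15 : w1 ≠ w5 := fun h => by subst h; exact N14 A54
  have e16 : w1 ≠ w6 := fun h => by subst h; exact N15 A65
  have e24 : w2 ≠ w4 := fun h => by subst h; exact N25 A45
  have e25 : w2 ≠ w5 := fun h => by subst h; exact N24 A54
  have e26 : w2 ≠ w6 := fun h => by subst h; exact N25 A65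
  have e31 : w3 ≠ w1 := fun h => by subst h; exact N14 A34
  have e35 : w3 ≠ w5 := fun h => by subst h; exact N36 A56
  have e36 : w3 ≠ w6 := fun h => by subst h; exact N35 A65
  have e41 : w4 ≠ w1 := fun h => by subst h; exact N24 A21
  have e42 : w4 ≠ w2 := fun h => by subst h; exact N14 A12
  have e46 : w4 ≠ w6 := fun h => by subst h; exact N36 A34
  have e51 : w5 ≠ w1 := fun h => by subst h; exact N25 A21
  have e52 : w5 ≠ w2 := fun h => by subst h; exact N15 A12
  have e53 : w5 ≠ w3 := fun h => by subst h; exact N25 A23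
  have e61 : w6 ≠ w1 := fun h => by subst h; exact N26 A21
  have e62 : w6 ≠ w2 := fun h => by subst h; exact N16 A12
  have e63 : w6 ≠ w3 := fun h => by subst h; exact N26 A23
  have e64 : w6 ≠ w4 := fun h => by subst h; exact N36 A34
  refine ⟨⟨fun i => match i with
    | 0 => w1
    | 1 => w2
    | 2 => w3
    | 3 => w4
    | 4 => w5
    | 5 => w6, ?_⟩, ?_⟩
  · intro i j h
    fin_cases i <;> fin_cases j
    exacts [rfl, absurd h A12.ne, absurd h e13, absurd h e14, absurd h e15, absurd h e16, absurd h A21.ne, rfl, absurd h A23.ne, absurd h e24, absurd h e25, absurd h e26, absurd h e31, absurd h A32.ne, rfl, absurd h A34.ne, absurd h e35, absurd h e36, absurd h e41, absurd h e42, absurd h A43.ne, rfl, absurd h A45.ne, absurd h e46, absurd h e51, absurd h e52, absurd h e53, absurd h A54.ne, rfl, absurd h A56.ne, absurd h e61, absurd h e62, absurd h e63, absurd h e64, absurd h A65.ne, rfl]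
  · intro i j
    fin_cases i <;> fin_cases j
    exacts [iff_of_false (G.loopless.irrefl w1) (by decide), iff_of_true A12 (by decide), iff_of_false N13 (by decide), iff_of_false N14 (by decide), iff_of_false N15 (by decide), iff_of_false N16 (by decide), iff_of_true A21 (by decide), iff_of_false (G.loopless.irrefl w2) (by decide), iff_of_true A23 (by decide), iff_of_false N24 (by decide), iff_of_false N25 (by decide), iff_of_false N26 (by decide), iff_of_false N31 (by decide), iff_of_true A32 (by decide), iff_of_false (G.loopless.irrefl w3) (by decide), iff_of_true A34 (by decide), iff_of_false N35 (by decide), iff_of_false N36 (by decide), iff_of_false N41 (by decide), iff_of_false N42 (by decide), iff_of_true A43 (by decide), iff_of_false (G.loopless.irrefl w4) (by decide), iff_of_true A45 (by decide), iff_of_false N46 (by decide), iff_of_false N51 (by decide), iff_of_false N52 (by decide), iff_of_false N53 (by decide), iff_of_true A54 (by decide), iff_of_false (G.loopless.irrefl w5) (by decide), iff_of_true A56 (by decide), iff_of_false N61 (by decide), iff_of_false N62 (by decide), iff_of_false N63 (by decide), iff_of_false N64 (by decide), iff_of_true A65 (by decide), iff_of_false (G.loopless.irrefl w6) (by decide)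]

lemma zmod5_cases (j : ZMod 5) : j=0∨j=1∨j=2∨j=3∨j=4 := by revert j; decide
lemma hasC5 {w1 w2 w3 w4 w5 : V}
    (A12 : G.Adj w1 w2) (N13 : ¬G.Adj w1 w3) (N14 : ¬G.Adj w1 w4) (A15 : G.Adj w1 w5) (A23 : G.Adj w2 w3) (N24 : ¬G.Adj w2 w4) (N25 : ¬G.Adj w2 w5) (A34 : G.Adj w3 w4) (N35 : ¬G.Adj w3 w5) (A45 : G.Adj w4 w5) :
    HasInducedCopy G (cyc 5) := by
  have A21 := A12.symm
  have N31 : ¬G.Adj w3 w1 := fun h => N13 h.symm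
  have N41 : ¬G.Adj w4 w1 := fun h => N14 h.symm
  have A51 := A15.symm
  have A32 := A23.symm
  have N42 : ¬G.Adj w4 w2 := fun h => N24 h.symm
  have N52 : ¬G.Adj w5 w2 := fun h => N25 h.symm
  have A43 := A34.symm
  have N53 : ¬G.Adj w5 w3 := fun h => N35 h.symm
  have A54 := A45.symm
  have e13 : w1 ≠ w3 := fun h => by subst h; exact N14 A34
  have e14 : w1 ≠ w4 := fun h => by subst h; exact N13 A43
  have e24 : w2 ≠ w4 := fun h => by subst h; exact N25 A45
  have e25 : w2 ≠ w5 := fun h => by subst h; exact N24 A54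
  have e31 : w3 ≠ w1 := fun h => by subst h; exact N35 A15
  have e35 : w3 ≠ w5 := fun h => by subst h; exact N13 A15
  have e41 : w4 ≠ w1 := fun h => by subst h; exact N24 A21
  have e42 : w4 ≠ w2 := fun h => by subst h; exact N14 A12
  have e52 : w5 ≠ w2 := fun h => by subst h; exact N35 A32
  have e53 : w5 ≠ w3 := fun h => by subst h; exact N25 A23
  refine ⟨⟨fun i => match i with
    | 0 => w1
    | 1 => w2
    | 2 => w3
    | 3 => w4
    | 4 => w5, ?_⟩, ?_⟩
  · intro i j h
    fin_cases i <;> fin_cases j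
    exacts [rfl, absurd h A12.ne, absurd h e13, absurd h e14, absurd h A15.ne, absurd h A21.ne, rfl, absurd h A23.ne, absurd h e24, absurd h e25, absurd h e31, absurd h A32.ne, rfl, absurd h A34.ne, absurd h e35, absurd h e41, absurd h e42, absurd h A43.ne, rfl, absurd h A45.ne, absurd h A51.ne, absurd h e52, absurd h e53, absurd h A54.ne, rfl]
  · intro i j
    rcases zmod5_cases i with rfl|rfl|rfl|rfl|rfl <;> rcases zmod5_cases j with rfl|rfl|rfl|rfl|rfl
    exacts [iff_of_false (G.loopless.irrefl w1) (by decide), iff_of_true A12 (by decide), iff_of_false N13 (by decide), iff_of_false N14 (by decide), iff_of_true A15 (by decide), iff_of_true A21 (by decide), iff_of_false (G.loopless.irrefl w2) (by decide), iff_of_true A23 (by decide), iff_of_false N24 (by decide), iff_of_false N25 (by decide), iff_of_false N31 (by decide), iff_of_true A32 (by decide), iff_of_false (G.loopless.irrefl w3) (by decide), iff_of_true A34 (by decide), iff_of_false N35 (by decide), iff_of_false N41 (by decide), iff_of_false N42 (by decide), iff_of_true A43 (by decide), iff_of_false (G.loopless.irrefl w4) (by decide), iff_of_true A45 (by decide),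 iff_of_true A51 (by decide), iff_of_false N52 (by decide), iff_of_false N53 (by decide), iff_of_true A54 (by decide), iff_of_false (G.loopless.irrefl w5) (by decide)]

lemma hasHouse {w1 w2 w3 w4 w5 : V}
    (N12 : ¬G.Adj w1 w2) (A13 : G.Adj w1 w3) (A14 : G.Adj w1 w4) (A15 : G.Adj w1 w5) (N23 : ¬G.Adj w2 w3) (A24 : G.Adj w2 w4) (A25 : G.Adj w2 w5) (N34 : ¬G.Adj w3 w4) (A35 : G.Adj w3 w5) (N45 : ¬G.Adj w4 w5) :
    HasInducedCopy G (pathGraph 5)ᶜ := by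
  have N21 : ¬G.Adj w2 w1 := fun h => N12 h.symm
  have A31 := A13.symm
  have A41 := A14.symm
  have A51 := A15.symm
  have N32 : ¬G.Adj w3 w2 := fun h => N23 h.symm
  have A42 := A24.symm
  have A52 := A25.symm
  have N43 : ¬G.Adj w4 w3 := fun h => N34 h.symm
  have A53 := A35.symm
  have N54 : ¬G.Adj w5 w4 := fun h => N45 h.symm
  have e12 : w1 ≠ w2 := fun h => by subst h; exact N23 A13
  have e21 : w2 ≠ w1 := fun h => by subst h; exact N23 A13
  have e23 : w2 ≠ w3 := fun h => by subst h; exact N12 A13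
  have e32 : w3 ≠ w2 := fun h => by subst h; exact N34 A24
  have e34 : w3 ≠ w4 := fun h => by subst h; exact N23 A24
  have e43 : w4 ≠ w3 := fun h => by subst h; exact N45 A35
  have e45 : w4 ≠ w5 := fun h => by subst h; exact N34 A35
  have e54 : w5 ≠ w4 := fun h => by subst h; exact N34 A35
  refine ⟨⟨fun i => match i with
    | 0 => w1
    | 1 => w2
    | 2 => w3
    | 3 => w4
    | 4 => w5, ?_⟩, ?_⟩
  · intro i j h
    fin_cases i <;> fin_cases j
    exacts [rfl, absurd h e12, absurd h A13.ne, absurd h A14.ne, absurd h A15.ne, absurd h e21, rfl, absurd h e23, absurd h A24.ne, absurd h A25.ne, absurd h A31.ne, absurd h e32, rfl, absurd h e34, absurd h A35.ne, absurd h A41.ne, absurd h A42.ne, absurd h e43, rfl, absurd h e45, absurd h A51.ne, absurd h A52.ne, absurd h A53.ne, absurd h e54, rfl]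
  · intro i j
    fin_cases i <;> fin_cases j
    exacts [iff_of_false (G.loopless.irrefl w1) (by decide), iff_of_false N12 (by decide), iff_of_true A13 (by decide), iff_of_true A14 (by decide), iff_of_true A15 (by decide), iff_of_false N21 (by decide), iff_of_false (G.loopless.irrefl w2) (by decide), iff_of_false N23 (by decide), iff_of_true A24 (by decide), iff_of_true A25 (by decide), iff_of_true A31 (by decide), iff_of_false N32 (by decide), iff_of_false (G.loopless.irrefl w3) (by decide), iff_of_false N34 (by decide), iff_of_true A35 (by decide), iff_of_true A41 (by decide), iff_of_true A42 (by decide), iff_of_false N43 (by decide), iff_of_false (G.loopless.irrefl w4) (by decide), iff_of_false N45 (by decide), iff_of_true A51 (by decide), iff_of_true A52 (by decide), iff_of_true A53 (by decide), iff_of_false N54 (by decide), iff_of_false (G.loopless.irrefl w5) (by decide)]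

end Helpers
section Rules
variable {V : Type*} {G : SimpleGraph V}

lemma zmod6_cases (j : ZMod 6) : j=0∨j=1∨j=2∨j=3∨j=4∨j=5 := by revert j; decide
lemma cyc6_add (j a b : ZMod 6) : (cyc 6).Adj (j+a) (j+b) ↔ (cyc 6).Adj a b := by
  revert j a b; decide
lemma cyc6_add0 (j b : ZMod 6) : (cyc 6).Adj j (j+b) ↔ (cyc 6).Adj 0 b := by
  revert j b; decide
lemma cyc6_add0' (j b : ZMod 6) : (cyc 6).Adj (j+b) j ↔ (cyc 6).Adj b 0 := by
  revert j b; decide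
lemma zadd_ne (j a b : ZMod 6) (h : a ≠ b) : j+a ≠ j+b := fun e => h (add_left_cancel e)
lemma zadd_ne0 (j b : ZMod 6) (h : b ≠ 0) : j ≠ j+b := fun e => h (left_eq_add.mp e)
lemma adjF (f : ZMod 6 ↪ V) (hf : ∀ a b, G.Adj (f a) (f b) ↔ (cyc 6).Adj a b)
    (a b : ZMod 6) (h : (cyc 6).Adj a b) : G.Adj (f a) (f b) := (hf a b).mpr h
lemma nadjF (f : ZMod 6 ↪ V) (hf : ∀ a b, G.Adj (f a) (f b) ↔ (cyc 6).Adj a b)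
    (a b : ZMod 6) (h : ¬(cyc 6).Adj a b) : ¬G.Adj (f a) (f b) :=
  fun hh => h ((hf a b).mp hh)
lemma neF (f : ZMod 6 ↪ V) (a b : ZMod 6) (h : a ≠ b) : f a ≠ f b :=
  fun hh => h (f.injective hh)

/-- claw centered at `f j` with leaves `v, f (j+1), f (j+5)`. -/
lemma rule1 (f : ZMod 6 ↪ V) (hf : ∀ a b, G.Adj (f a) (f b) ↔ (cyc 6).Adj a b)
    (v : V) (hv : ∀ k, v ≠ f k)
    (j : ZMod 6) (h0 : G.Adj v (f j)) (h1 : ¬G.Adj v (f (j+1)))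
    (h5 : ¬G.Adj v (f (j+5))) :
    HasInducedCopy G (completeBipartiteGraph (Fin 1) (Fin 3)) :=
  hasClaw (hv (j+1)) (hv (j+5)) (neF f (j+1) (j+5) (zadd_ne j 1 5 (by decide)))
    h0.symm (adjF f hf j (j+1) ((cyc6_add0 j 1).mpr (by decide))) (adjF f hf j (j+5) ((cyc6_add0 j 5).mpr (by decide)))
    h1 h5 (nadjF f hf (j+1) (j+5) (fun hh => absurd ((cyc6_add j 1 5).mp hh) (by decide)))

/-- claw centered at `v` with leaves `f j, f (j+2), f (j+4)`. -/
lemma rule2 (f : ZMod 6 ↪ V) (hf : ∀ a b, G.Adj (f a) (f b) ↔ (cyc 6).Adj a b)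
    (v : V) (j : ZMod 6) (h0 : G.Adj v (f j)) (h2 : G.Adj v (f (j+2)))
    (h4 : G.Adj v (f (j+4))) :
    HasInducedCopy G (completeBipartiteGraph (Fin 1) (Fin 3)) :=
  hasClaw (neF f j (j+2) (zadd_ne0 j 2 (by decide))) (neF f j (j+4) (zadd_ne0 j 4 (by decide)))
    (neF f (j+2) (j+4) (zadd_ne j 2 4 (by decide))) h0 h2 h4
    (nadjF f hf j (j+2) (fun hh => absurd ((cyc6_add0 j 2).mp hh) (by decide))) (nadjF f hf j (j+4) (fun hh => absurd ((cyc6_add0 j 4).mp hh) (by decide)))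
    (nadjF f hf (j+2) (j+4) (fun hh => absurd ((cyc6_add j 2 4).mp hh) (by decide)))

/-- induced P6 : `v, f j, f (j+1), f (j+2), f (j+3), f (j+4)`. -/
lemma rule3 (f : ZMod 6 ↪ V) (hf : ∀ a b, G.Adj (f a) (f b) ↔ (cyc 6).Adj a b)
    (v : V) (j : ZMod 6) (h0 : G.Adj v (f j)) (h1 : ¬G.Adj v (f (j+1)))
    (h2 : ¬G.Adj v (f (j+2))) (h3 : ¬G.Adj v (f (j+3))) (h4 : ¬G.Adj v (f (j+4))) :
    HasInducedCopy G (pathGraph 6) :=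
  hasP6 h0 h1 h2 h3 h4
    (adjF f hf j (j+1) ((cyc6_add0 j 1).mpr (by decide))) (nadjF f hf j (j+2) (fun hh => absurd ((cyc6_add0 j 2).mp hh) (by decide)))
    (nadjF f hf j (j+3) (fun hh => absurd ((cyc6_add0 j 3).mp hh) (by decide))) (nadjF f hf j (j+4) (fun hh => absurd ((cyc6_add0 j 4).mp hh) (by decide)))
    (adjF f hf (j+1) (j+2) ((cyc6_add j 1 2).mpr (by decide))) (nadjF f hf (j+1) (j+3) (fun hh => absurd ((cyc6_add j 1 3).mp hh) (by decide)))
    (nadjF f hf (j+1) (j+4) (fun hh => absurd ((cyc6_add j 1 4).mp hh) (by decide))) (adjF f hf (j+2) (j+3) ((cyc6_add j 2 3).mpr (by decide)))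
    (nadjF f hf (j+2) (j+4) (fun hh => absurd ((cyc6_add j 2 4).mp hh) (by decide))) (adjF f hf (j+3) (j+4) ((cyc6_add j 3 4).mpr (by decide)))

/-- induced C5 : `v, f j, f (j+5), f (j+4), f (j+3)`. -/
lemma rule4 (f : ZMod 6 ↪ V) (hf : ∀ a b, G.Adj (f a) (f b) ↔ (cyc 6).Adj a b)
    (v : V) (j : ZMod 6) (h0 : G.Adj v (f j)) (h3 : G.Adj v (f (j+3)))
    (h4 : ¬G.Adj v (f (j+4))) (h5 : ¬G.Adj v (f (j+5))) :
    HasInducedCopy G (cyc 5) :=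
  hasC5 h0 h5 h4 h3
    (adjF f hf j (j+5) ((cyc6_add0 j 5).mpr (by decide))) (nadjF f hf j (j+4) (fun hh => absurd ((cyc6_add0 j 4).mp hh) (by decide)))
    (nadjF f hf j (j+3) (fun hh => absurd ((cyc6_add0 j 3).mp hh) (by decide))) (adjF f hf (j+5) (j+4) ((cyc6_add j 5 4).mpr (by decide)))
    (nadjF f hf (j+5) (j+3) (fun hh => absurd ((cyc6_add j 5 3).mp hh) (by decide))) (adjF f hf (j+4) (j+3) ((cyc6_add j 4 3).mpr (by decide)))

/-- induced house : `v, f (j+2), f j, f (j+3), f (j+1)`. -/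
lemma rule5 (f : ZMod 6 ↪ V) (hf : ∀ a b, G.Adj (f a) (f b) ↔ (cyc 6).Adj a b)
    (v : V) (j : ZMod 6) (h0 : G.Adj v (f j)) (h1 : G.Adj v (f (j+1)))
    (h3 : G.Adj v (f (j+3))) (h2 : ¬G.Adj v (f (j+2))) :
    HasInducedCopy G (pathGraph 5)ᶜ :=
  hasHouse h2 h0 h3 h1
    (nadjF f hf (j+2) j (fun hh => absurd ((cyc6_add0' j 2).mp hh) (by decide))) (adjF f hf (j+2) (j+3) ((cyc6_add j 2 3).mpr (by decide)))
    (adjF f hf (j+2) (j+1) ((cyc6_add j 2 1).mpr (by decide))) (nadjF f hf j (j+3) (fun hh => absurd ((cyc6_add0 j 3).mp hh) (by decide)))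
    (adjF f hf j (j+1) ((cyc6_add0 j 1).mpr (by decide))) (nadjF f hf (j+3) (j+1) (fun hh => absurd ((cyc6_add j 3 1).mp hh) (by decide)))

end Rules
lemma classify0 {V : Type*} {G : SimpleGraph V}
    (hP6 : ¬ HasInducedCopy G (pathGraph 6))
    (hC5 : ¬ HasInducedCopy G (cyc 5))
    (hP5c : ¬ HasInducedCopy G (pathGraph 5)ᶜ)
    (hClaw : ¬ HasInducedCopy G (completeBipartiteGraph (Fin 1) (Fin 3)))
    (f : ZMod 6 ↪ V) (hf : ∀ a b, G.Adj (f a) (f b) ↔ (cyc 6).Adj a b)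
    (v : V) (hv : ∀ k, v ≠ f k) (h0 : G.Adj v (f 0)) :
    ∃ i : ZMod 6, ∀ j, G.Adj v (f j) ↔ (j = i - 1 ∨ j = i ∨ j = i + 1) := by
  by_cases h1 : G.Adj v (f 1) <;> by_cases h2 : G.Adj v (f 2) <;>
    by_cases h3 : G.Adj v (f 3) <;> by_cases h4 : G.Adj v (f 4) <;>
    by_cases h5 : G.Adj v (f 5)
  · exact absurd (rule2 f hf v 0 h0 h2 h4) hClaw
  · exact absurd (rule2 f hf v 0 h0 h2 h4) hClaw
  · exact absurd (rule2 f hf v 1 h1 h3 h5) hClaw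
  · exact absurd (rule4 f hf v 0 h0 h3 h4 h5) hC5
  · exact absurd (rule2 f hf v 0 h0 h2 h4) hClaw
  · exact absurd (rule2 f hf v 0 h0 h2 h4) hClaw
  · exact absurd (rule4 f hf v 5 h5 h2 h3 h4) hC5
  · refine ⟨1, fun j => ?_⟩
    rcases zmod6_cases j with rfl|rfl|rfl|rfl|rfl|rfl
    exacts [iff_of_true h0 (by decide), iff_of_true h1 (by decide), iff_of_true h2 (by decide), iff_of_false h3 (by decide), iff_of_false h4 (by decide), iff_of_false h5 (by decide)]
  · exact absurd (rule2 f hf v 1 h1 h3 h5) hClaw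
  · exact absurd (rule5 f hf v 0 h0 h1 h3 h2) hP5c
  · exact absurd (rule2 f hf v 1 h1 h3 h5) hClaw
  · exact absurd (rule4 f hf v 0 h0 h3 h4 h5) hC5
  · exact absurd (rule4 f hf v 4 h4 h1 h2 h3) hC5
  · exact absurd (rule4 f hf v 4 h4 h1 h2 h3) hC5
  · refine ⟨0, fun j => ?_⟩
    rcases zmod6_cases j with rfl|rfl|rfl|rfl|rfl|rfl
    exacts [iff_of_true h0 (by decide), iff_of_true h1 (by decide), iff_of_false h2 (by decide), iff_of_false h3 (by decide), iff_of_false h4 (by decide), iff_of_true h5 (by decide)]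
  · exact absurd (rule3 f hf v 1 h1 h2 h3 h4 h5) hP6
  · exact absurd (rule2 f hf v 0 h0 h2 h4) hClaw
  · exact absurd (rule2 f hf v 0 h0 h2 h4) hClaw
  · exact absurd (rule5 f hf v 2 h2 h3 h5 h4) hP5c
  · exact absurd (rule4 f hf v 0 h0 h3 h4 h5) hC5
  · exact absurd (rule2 f hf v 0 h0 h2 h4) hClaw
  · exact absurd (rule2 f hf v 0 h0 h2 h4) hClaw
  · exact absurd (rule4 f hf v 5 h5 h2 h3 h4) hC5
  · exact absurd (rule1 f hf v hv 0 h0 h1 h5) hClaw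
  · exact absurd (rule4 f hf v 3 h3 h0 h1 h2) hC5
  · exact absurd (rule4 f hf v 3 h3 h0 h1 h2) hC5
  · exact absurd (rule4 f hf v 3 h3 h0 h1 h2) hC5
  · exact absurd (rule4 f hf v 0 h0 h3 h4 h5) hC5
  · refine ⟨5, fun j => ?_⟩
    rcases zmod6_cases j with rfl|rfl|rfl|rfl|rfl|rfl
    exacts [iff_of_true h0 (by decide), iff_of_false h1 (by decide), iff_of_false h2 (by decide), iff_of_false h3 (by decide), iff_of_true h4 (by decide), iff_of_true h5 (by decide)]
  · exact absurd (rule1 f hf v hv 0 h0 h1 h5) hClaw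
  · exact absurd (rule3 f hf v 0 h0 h1 h2 h3 h4) hP6
  · exact absurd (rule3 f hf v 0 h0 h1 h2 h3 h4) hP6
section Main
variable {V : Type*} {G : SimpleGraph V}

lemma cyc6_addR (a b k : ZMod 6) : (cyc 6).Adj (a+k) (b+k) ↔ (cyc 6).Adj a b := by
  revert a b k; decide

lemma shift_triple (j0 i j : ZMod 6) :
    (j - j0 = i - 1 ∨ j - j0 = i ∨ j - j0 = i + 1) ↔
      (j = (i+j0) - 1 ∨ j = (i+j0) ∨ j = (i+j0)+1) := by
  revert j0 i j; decide

lemma P_unique (i i' : ZMod 6)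
    (h : ∀ j : ZMod 6, (j = i-1 ∨ j = i ∨ j = i+1) ↔ (j = i'-1 ∨ j = i' ∨ j = i'+1)) :
    i = i' := by revert i i'; decide

lemma classify {V : Type*} {G : SimpleGraph V}
    (hP6 : ¬ HasInducedCopy G (pathGraph 6))
    (hC5 : ¬ HasInducedCopy G (cyc 5))
    (hP5c : ¬ HasInducedCopy G (pathGraph 5)ᶜ)
    (hClaw : ¬ HasInducedCopy G (completeBipartiteGraph (Fin 1) (Fin 3)))
    (f : ZMod 6 ↪ V) (hf : ∀ a b, G.Adj (f a) (f b) ↔ (cyc 6).Adj a b)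
    (v : V) (hv : ∀ k, v ≠ f k) (j0 : ZMod 6) (hj0 : G.Adj v (f j0)) :
    ∃ i : ZMod 6, ∀ j, G.Adj v (f j) ↔ (j = i - 1 ∨ j = i ∨ j = i + 1) := by
  let g : ZMod 6 ↪ V := (Equiv.addRight j0).toEmbedding.trans f
  have hga : ∀ a, g a = f (a + j0) := fun a => rfl
  have hg : ∀ a b, G.Adj (g a) (g b) ↔ (cyc 6).Adj a b := fun a b => by
    rw [hga, hga, hf, cyc6_addR]
  have hgv : ∀ k, v ≠ g k := fun k => hv _
  have h0 : G.Adj v (g 0) := by rw [hga, zero_add]; exact hj0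
  obtain ⟨i, hi⟩ := classify0 hP6 hC5 hP5c hClaw g hg v hgv h0
  refine ⟨i + j0, fun j => ?_⟩
  have h := hi (j - j0)
  rw [hga, sub_add_cancel] at h
  rw [h, shift_triple]

lemma exists_crossing {V : Type*} {G : SimpleGraph V} {S : Set V} {x y : V}
    (w : G.Walk x y) (hy : y ∉ S) : x ∈ S → ∃ a b, a ∈ S ∧ b ∉ S ∧ G.Adj a b := by
  induction w with
  | nil => exact fun hx => absurd hx hy
  | @cons a b c hab p ih =>
      intro hx
      by_cases hb : b ∈ S
      · exact ih hy hb
      · exact ⟨a, b, hx, hb, hab⟩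

lemma existsP {V : Type*} {G : SimpleGraph V} (hconn : G.Connected)
    (hP6 : ¬ HasInducedCopy G (pathGraph 6))
    (hC5 : ¬ HasInducedCopy G (cyc 5))
    (hP5c : ¬ HasInducedCopy G (pathGraph 5)ᶜ)
    (hClaw : ¬ HasInducedCopy G (completeBipartiteGraph (Fin 1) (Fin 3)))
    (f : ZMod 6 ↪ V) (hf : ∀ a b, G.Adj (f a) (f b) ↔ (cyc 6).Adj a b) :
    ∀ v : V, ∃ i, ∀ j, ((v = f j ∨ G.Adj v (f j)) ↔ (j = i-1 ∨ j = i ∨ j = i+1)) := by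
  have tp1 : ∀ a : ZMod 6, (cyc 6).Adj a (a+1) := by decide
  have tm1 : ∀ a : ZMod 6, (cyc 6).Adj a (a-1) := by decide
  have hC : ∀ k : ZMod 6, ∀ j, ((f k = f j ∨ G.Adj (f k) (f j)) ↔ (j = k-1 ∨ j = k ∨ j = k+1)) := by
    intro k j
    constructor
    · rintro (h|h)
      · exact Or.inr (Or.inl (f.injective h).symm)
      · rcases (hf k j).mp h with ⟨hne, (h'|h')⟩
        · left; rw [h']; ring
        · exact Or.inr (Or.inr h')
    · rintro (rfl|rfl|rfl)
      · exact Or.inr ((hf _ _).mpr (tm1 k))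
      · exact Or.inl rfl
      · exact Or.inr ((hf _ _).mpr (tp1 k))
  intro v
  by_cases hvC : ∃ k, v = f k
  · obtain ⟨k, rfl⟩ := hvC; exact ⟨k, hC k⟩
  push_neg at hvC
  by_cases hnb : ∃ j0, G.Adj v (f j0)
  · obtain ⟨j0, hj0⟩ := hnb
    obtain ⟨i, hi⟩ := classify hP6 hC5 hP5c hClaw f hf v hvC j0 hj0
    exact ⟨i, fun j => (or_iff_right (hvC j)).trans (hi j)⟩
  push_neg at hnb
  exfalso
  set S : Set V := {w | ∃ j, w = f j ∨ G.Adj w (f j)} with hSdef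
  have hx : f 0 ∈ S := ⟨0, Or.inl rfl⟩
  have hy : v ∉ S := by rintro ⟨j, (h|h)⟩; exacts [hvC j h, hnb j h]
  obtain ⟨a, b, ha, hb, hab⟩ := exists_crossing ((hconn.preconnected (f 0) v).some) hy hx
  obtain ⟨j, haj⟩ := ha
  have haj' : G.Adj a (f j) := by
    rcases haj with h|h
    · exfalso; exact hb ⟨j, Or.inr (h ▸ hab.symm)⟩
    · exact h
  by_cases haC : ∃ k, a = f k
  · obtain ⟨k, rfl⟩ := haC; exact hb ⟨k, Or.inr hab.symm⟩
  push_neg at haC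
  obtain ⟨i, hi⟩ := classify hP6 hC5 hP5c hClaw f hf a haC j haj'
  have hbn : ∀ k, ¬G.Adj b (f k) := fun k h => hb ⟨k, Or.inr h⟩
  have nt2 : ∀ a : ZMod 6, ¬(a+2 = a-1 ∨ a+2 = a ∨ a+2 = a+1) := by decide
  have nt3 : ∀ a : ZMod 6, ¬(a+3 = a-1 ∨ a+3 = a ∨ a+3 = a+1) := by decide
  have nt4 : ∀ a : ZMod 6, ¬(a+4 = a-1 ∨ a+4 = a ∨ a+4 = a+1) := by decide
  exact hP6 (hasP6 hab.symm (hbn (i+1)) (hbn (i+2)) (hbn (i+3)) (hbn (i+4))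
    ((hi (i+1)).mpr (Or.inr (Or.inr rfl)))
    (fun h => nt2 i ((hi (i+2)).mp h))
    (fun h => nt3 i ((hi (i+3)).mp h))
    (fun h => nt4 i ((hi (i+4)).mp h))
    (adjF f hf (i+1) (i+2) ((cyc6_add i 1 2).mpr (by decide)))
    (nadjF f hf (i+1) (i+3) (fun hh => absurd ((cyc6_add i 1 3).mp hh) (by decide)))
    (nadjF f hf (i+1) (i+4) (fun hh => absurd ((cyc6_add i 1 4).mp hh) (by decide)))
    (adjF f hf (i+2) (i+3) ((cyc6_add i 2 3).mpr (by decide)))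
    (nadjF f hf (i+2) (i+4) (fun hh => absurd ((cyc6_add i 2 4).mp hh) (by decide)))
    (adjF f hf (i+3) (i+4) ((cyc6_add i 3 4).mpr (by decide))))

end Main
lemma classC {V : Type*} {G : SimpleGraph V}
    (f : ZMod 6 ↪ V) (hf : ∀ a b, G.Adj (f a) (f b) ↔ (cyc 6).Adj a b) (k j : ZMod 6) :
    ((f k = f j ∨ G.Adj (f k) (f j)) ↔ (j = k-1 ∨ j = k ∨ j = k+1)) := by
  have tp1 : ∀ a : ZMod 6, (cyc 6).Adj a (a+1) := by decide
  have tm1 : ∀ a : ZMod 6, (cyc 6).Adj a (a-1) := by decide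
  constructor
  · rintro (h|h)
    · exact Or.inr (Or.inl (f.injective h).symm)
    · rcases (hf k j).mp h with ⟨hne, (h'|h')⟩
      · left; rw [h']; ring
      · exact Or.inr (Or.inr h')
  · rintro (rfl|rfl|rfl)
    · exact Or.inr ((hf _ _).mpr (tm1 k))
    · exact Or.inl rfl
    · exact Or.inr ((hf _ _).mpr (tp1 k))

theorem stmt_9' {V : Type*} [Fintype V] (G : SimpleGraph V) (hconn : G.Connected)
    (hP6 : ¬ HasInducedCopy G (pathGraph 6))
    (hC5 : ¬ HasInducedCopy G (cyc 5))
    (hP5c : ¬ HasInducedCopy G (pathGraph 5)ᶜ)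
    (hClaw : ¬ HasInducedCopy G (completeBipartiteGraph (Fin 1) (Fin 3)))
    (hC6 : HasInducedCopy G (cyc 6)) :
    ∃ m : ZMod 6 → ℕ, (∀ i, 0 < m i) ∧ Nonempty (G ≃g compExp 6 m) := by
  classical
  obtain ⟨f, hf⟩ := hC6
  choose σ hσ using existsP hconn hP6 hC5 hP5c hClaw f hf
  have nt2 : ∀ a : ZMod 6, ¬(a+2 = a-1 ∨ a+2 = a ∨ a+2 = a+1) := by decide
  have nt3 : ∀ a : ZMod 6, ¬(a+3 = a-1 ∨ a+3 = a ∨ a+3 = a+1) := by decide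
  have nt4 : ∀ a : ZMod 6, ¬(a+4 = a-1 ∨ a+4 = a ∨ a+4 = a+1) := by decide
  have tm1' : ∀ a : ZMod 6, (a+5 = a-1 ∨ a+5 = a ∨ a+5 = a+1) := by decide
  have z_a2 : ∀ a : ZMod 6, (a+2 = (a+1)-1 ∨ a+2 = (a+1) ∨ a+2 = (a+1)+1) := by decide
  have z_n3 : ∀ a : ZMod 6, ¬(a+3 = (a+1)-1 ∨ a+3 = (a+1) ∨ a+3 = (a+1)+1) := by decide
  have z_n4 : ∀ a : ZMod 6, ¬(a+4 = (a+1)-1 ∨ a+4 = (a+1) ∨ a+4 = (a+1)+1) := by decide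
  have z_n5 : ∀ a : ZMod 6, ¬(a+5 = (a+1)-1 ∨ a+5 = (a+1) ∨ a+5 = (a+1)+1) := by decide
  have y_a3 : ∀ a : ZMod 6, (a+3 = (a+2)-1 ∨ a+3 = (a+2) ∨ a+3 = (a+2)+1) := by decide
  have y_n4 : ∀ a : ZMod 6, ¬(a+4 = (a+2)-1 ∨ a+4 = (a+2) ∨ a+4 = (a+2)+1) := by decide
  have y_n5 : ∀ a : ZMod 6, ¬(a+5 = (a+2)-1 ∨ a+5 = (a+2) ∨ a+5 = (a+2)+1) := by decide
  have y_n0 : ∀ a : ZMod 6, ¬(a = (a+2)-1 ∨ a = (a+2) ∨ a = (a+2)+1) := by decide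
  have x_a2 : ∀ a : ZMod 6, (a+2 = (a+3)-1 ∨ a+2 = (a+3) ∨ a+2 = (a+3)+1) := by decide
  have x_n1 : ∀ a : ZMod 6, ¬(a+1 = (a+3)-1 ∨ a+1 = (a+3) ∨ a+1 = (a+3)+1) := by decide
  have x_n0 : ∀ a : ZMod 6, ¬(a = (a+3)-1 ∨ a = (a+3) ∨ a = (a+3)+1) := by decide
  have z42 : ∀ a b : ZMod 6, b = a + 4 → a = b + 2 := by decide
  have z51 : ∀ a b : ZMod 6, b = a + 5 → a = b + 1 := by decide
  have hσf : ∀ k, σ (f k) = k :=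
    fun k => P_unique _ _ (fun j => ((hσ (f k) j).symm.trans (classC f hf k j)))
  have hEq : ∀ (x : V) k, x = f k → σ x = k := fun x k h => by rw [h, hσf]
  have hA : ∀ x, (∀ k, x ≠ f k) → ∀ j, (j = σ x - 1 ∨ j = σ x ∨ j = σ x + 1) → G.Adj x (f j) :=
    fun x hx j h => ((hσ x j).mpr h).resolve_left (hx j)
  have hN : ∀ (x : V) j, ¬(j = σ x - 1 ∨ j = σ x ∨ j = σ x + 1) → ¬G.Adj x (f j) :=
    fun x j h e => h ((hσ x j).mp (Or.inr e))
  have key0 : ∀ u w, σ w = σ u → u ≠ w → G.Adj u w := by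
    intro u w he hne
    by_contra hn
    by_cases huC : ∃ k, u = f k
    · obtain ⟨k, rfl⟩ := huC
      have hk : k = σ w := by rw [he, hσf]
      rcases (hσ w k).mpr (by rw [hk]; exact Or.inr (Or.inl rfl)) with h|h
      · exact hne h.symm
      · exact hn h.symm
    push_neg at huC
    by_cases hwC : ∃ k, w = f k
    · obtain ⟨k, rfl⟩ := hwC
      have hk : k = σ u := by rw [← he, hσf]
      rcases (hσ u k).mpr (by rw [hk]; exact Or.inr (Or.inl rfl)) with h|h
      · exact hne h
      · exact hn h
    push_neg at hwC
    refine hClaw (hasClaw hne (huC (σ u + 2)) (hwC (σ u + 2))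
      (hA u huC (σ u + 1) (Or.inr (Or.inr rfl))).symm
      (hA w hwC (σ u + 1) (by rw [he]; exact Or.inr (Or.inr rfl))).symm
      (adjF f hf (σ u + 1) (σ u + 2) ((cyc6_add (σ u) 1 2).mpr (by decide)))
      hn (hN u (σ u + 2) (nt2 (σ u))) (hN w (σ u + 2) (by rw [he]; exact nt2 (σ u))))
  have key1 : ∀ u w, σ w = σ u + 1 → G.Adj u w := by
    intro u w he
    by_contra hn
    by_cases huC : ∃ k, u = f k
    · obtain ⟨k, rfl⟩ := huC
      have hk : σ w = k + 1 := by rw [he, hσf]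
      rcases (hσ w k).mpr (by rw [hk]; left; ring) with h|h
      · exact (zadd_ne0 k 1 (by decide)) ((hEq w k h).symm.trans hk)
      · exact hn h.symm
    push_neg at huC
    by_cases hwC : ∃ k, w = f k
    · obtain ⟨k, rfl⟩ := hwC
      have hk : k = σ u + 1 := by rw [← hσf k]; exact he
      rcases (hσ u k).mpr (by rw [hk]; exact Or.inr (Or.inr rfl)) with h|h
      · exact (zadd_ne0 (σ u) 1 (by decide)) ((hEq u k h).trans hk)
      · exact hn h
    push_neg at hwC
    refine hP6 (hasP6 (w1 := w) (w2 := f (σ u + 2)) (w3 := f (σ u + 3)) (w4 := f (σ u + 4))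
      (w5 := f (σ u + 5)) (w6 := u) ?_ ?_ ?_ ?_ ?_ ?_ ?_ ?_ ?_ ?_ ?_ ?_ ?_ ?_ ?_)
    · exact hA w hwC _ (by rw [he]; exact z_a2 (σ u))
    · exact hN w _ (by rw [he]; exact z_n3 (σ u))
    · exact hN w _ (by rw [he]; exact z_n4 (σ u))
    · exact hN w _ (by rw [he]; exact z_n5 (σ u))
    · exact fun h => hn h.symm
    · exact adjF f hf _ _ ((cyc6_add (σ u) 2 3).mpr (by decide))
    · exact nadjF f hf _ _ (fun hh => absurd ((cyc6_add (σ u) 2 4).mp hh) (by decide))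
    · exact nadjF f hf _ _ (fun hh => absurd ((cyc6_add (σ u) 2 5).mp hh) (by decide))
    · exact fun h => hN u _ (nt2 (σ u)) h.symm
    · exact adjF f hf _ _ ((cyc6_add (σ u) 3 4).mpr (by decide))
    · exact nadjF f hf _ _ (fun hh => absurd ((cyc6_add (σ u) 3 5).mp hh) (by decide))
    · exact fun h => hN u _ (nt3 (σ u)) h.symm
    · exact adjF f hf _ _ ((cyc6_add (σ u) 4 5).mpr (by decide))
    · exact fun h => hN u _ (nt4 (σ u)) h.symm
    · exact (hA u huC _ (tm1' (σ u))).symm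
  have key2 : ∀ u w, σ w = σ u + 2 → ¬G.Adj u w := by
    intro u w he hn
    by_cases huC : ∃ k, u = f k
    · obtain ⟨k, rfl⟩ := huC
      have hk : σ w = k + 2 := by rw [he, hσf]
      exact hN w k (by rw [hk]; exact y_n0 k) hn.symm
    push_neg at huC
    by_cases hwC : ∃ k, w = f k
    · obtain ⟨k, rfl⟩ := hwC
      have hk : k = σ u + 2 := by rw [← hσf k]; exact he
      exact hN u k (by rw [hk]; exact nt2 (σ u)) hn
    push_neg at hwC
    refine hC5 (hasC5 (w1:=u) (w2:=w) (w3:=f (σ u+3)) (w4:=f (σ u+4)) (w5:=f (σ u+5))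
      ?_ ?_ ?_ ?_ ?_ ?_ ?_ ?_ ?_ ?_)
    · exact hn
    · exact hN u _ (nt3 (σ u))
    · exact hN u _ (nt4 (σ u))
    · exact hA u huC _ (tm1' (σ u))
    · exact hA w hwC _ (by rw [he]; exact y_a3 (σ u))
    · exact hN w _ (by rw [he]; exact y_n4 (σ u))
    · exact hN w _ (by rw [he]; exact y_n5 (σ u))
    · exact adjF f hf _ _ ((cyc6_add (σ u) 3 4).mpr (by decide))
    · exact nadjF f hf _ _ (fun hh => absurd ((cyc6_add (σ u) 3 5).mp hh) (by decide))
    · exact adjF f hf _ _ ((cyc6_add (σ u) 4 5).mpr (by decide))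
  have key3 : ∀ u w, σ w = σ u + 3 → ¬G.Adj u w := by
    intro u w he hn
    by_cases huC : ∃ k, u = f k
    · obtain ⟨k, rfl⟩ := huC
      have hk : σ w = k + 3 := by rw [he, hσf]
      exact hN w k (by rw [hk]; exact x_n0 k) hn.symm
    push_neg at huC
    by_cases hwC : ∃ k, w = f k
    · obtain ⟨k, rfl⟩ := hwC
      have hk : k = σ u + 3 := by rw [← hσf k]; exact he
      exact hN u k (by rw [hk]; exact nt3 (σ u)) hn
    push_neg at hwC
    refine hP5c (hasHouse (w1:=w) (w2:=f (σ u+1)) (w3:=f (σ u+3)) (w4:=u) (w5:=f (σ u+2))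
      ?_ ?_ ?_ ?_ ?_ ?_ ?_ ?_ ?_ ?_)
    · exact hN w _ (by rw [he]; exact x_n1 (σ u))
    · exact hA w hwC _ (by rw [he]; exact Or.inr (Or.inl rfl))
    · exact hn.symm
    · exact hA w hwC _ (by rw [he]; exact x_a2 (σ u))
    · exact nadjF f hf _ _ (fun hh => absurd ((cyc6_add (σ u) 1 3).mp hh) (by decide))
    · exact (hA u huC _ (Or.inr (Or.inr rfl))).symm
    · exact adjF f hf _ _ ((cyc6_add (σ u) 1 2).mpr (by decide))
    · exact fun h => hN u _ (nt3 (σ u)) h.symm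
    · exact adjF f hf _ _ ((cyc6_add (σ u) 3 2).mpr (by decide))
    · exact hN u _ (nt2 (σ u))
  have adjchar : ∀ u w : V,
      G.Adj u w ↔ ((σ u = σ w ∧ u ≠ w) ∨ (σ u ≠ σ w ∧ (σ u = σ w + 1 ∨ σ w = σ u + 1))) := by
    intro u w
    have hsub : ∀ d : ZMod 6, σ w - σ u = d → σ w = σ u + d := fun d h => by rw [← h]; ring
    rcases zmod6_cases (σ w - σ u) with h|h|h|h|h|h <;> have he := hsub _ h
    · rw [add_zero] at he
      constructor
      · exact fun hadj => Or.inl ⟨he.symm, hadj.ne⟩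
      · rintro (⟨_, hne⟩|⟨hne, _⟩)
        · exact key0 u w he hne
        · exact absurd he.symm hne
    · exact iff_of_true (key1 u w he)
        (Or.inr ⟨fun e => zadd_ne0 (σ u) 1 (by decide) (e.trans he), Or.inr he⟩)
    · refine iff_of_false (key2 u w he) ?_
      rintro (⟨e,_⟩|⟨_,(e|e)⟩)
      · exact zadd_ne0 (σ u) 2 (by decide) (e.trans he)
      · exact zadd_ne0 (σ u) 3 (by decide) (e.trans (by rw [he]; ring))
      · exact zadd_ne (σ u) 2 1 (by decide) (he.symm.trans e)
    · refine iff_of_false (key3 u w he) ?_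
      rintro (⟨e,_⟩|⟨_,(e|e)⟩)
      · exact zadd_ne0 (σ u) 3 (by decide) (e.trans he)
      · exact zadd_ne0 (σ u) 4 (by decide) (e.trans (by rw [he]; ring))
      · exact zadd_ne (σ u) 3 1 (by decide) (he.symm.trans e)
    · have he' := z42 _ _ he
      refine iff_of_false (fun hh => key2 w u he' hh.symm) ?_
      rintro (⟨e,_⟩|⟨_,(e|e)⟩)
      · exact zadd_ne0 (σ u) 4 (by decide) (e.trans he)
      · exact zadd_ne (σ w) 2 1 (by decide) (he'.symm.trans e)
      · exact zadd_ne (σ u) 4 1 (by decide) (he.symm.trans e)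
    · have he' := z51 _ _ he
      exact iff_of_true (key1 w u he').symm
        (Or.inr ⟨fun e => zadd_ne0 (σ w) 1 (by decide) (e.symm.trans he'), Or.inl he'⟩)
  refine ⟨fun i => Fintype.card {v : V // σ v = i},
    fun i => Fintype.card_pos_iff.mpr ⟨⟨f i, hσf i⟩⟩, ?_⟩
  let e : V ≃ Σ i : ZMod 6, Fin (Fintype.card {v : V // σ v = i}) :=
    (Equiv.sigmaFiberEquiv σ).symm.trans (Equiv.sigmaCongrRight fun i => Fintype.equivFin _)
  refine ⟨⟨e, fun {u w} => ?_⟩⟩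
  show ((σ u = σ w ∧ e u ≠ e w) ∨ (σ u ≠ σ w ∧ (σ u = σ w + 1 ∨ σ w = σ u + 1))) ↔ G.Adj u w
  rw [adjchar u w, Ne, e.apply_eq_iff_eq]

theorem stmt_9 {V : Type*} [Fintype V] (G : SimpleGraph V) (hconn : G.Connected)
    (hP6 : ¬ HasInducedCopy G (pathGraph 6))
    (hC5 : ¬ HasInducedCopy G (cyc 5))
    (hP5c : ¬ HasInducedCopy G (pathGraph 5)ᶜ)
    (hClaw : ¬ HasInducedCopy G (completeBipartiteGraph (Fin 1) (Fin 3)))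
    (hC6 : HasInducedCopy G (cyc 6)) :
    ∃ m : ZMod 6 → ℕ, (∀ i, 0 < m i) ∧ Nonempty (G ≃g compExp 6 m) := by
  exact stmt_9' G hconn hP6 hC5 hP5c hClaw hC6
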